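/- Let n ≥ 1 and consider the graph G on vertex set {x_1,…,x_n} ∪ {y_1,…,y_n} ∪ {s, t, ℓ} whose edges are: a set E_H ⊆ {(x_i, y_j)} of bipartite edges; edges from s to every vertex among the x's and y's except y_j (for a fixed j); and edges (ℓ, x_i), (s, t), (t, y_j) (for a fixed i). Then G is connected, and leaf(G) = 2n + 1 if (x_i, y_j) ∈ E_H, and leaf(G) = 2n otherwise. -/

import Mathlib

/-- `maxLeaf G` is the maximum number of leaves (degree-one vertices) over all
spanning trees of `G`. -/
noncomputable def maxLeaf {V : Type*} (G : SimpleGraph V) : ℕ :=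
  sSup {c | ∃ T : SimpleGraph V, T ≤ G ∧ T.IsTree ∧
    {v | (T.neighborSet v).ncard = 1}.ncard = c}

/-- Vertices of the lower-bound gadget: `x_1, …, x_n`, `y_1, …, y_n`, and the three
special vertices `s`, `t`, `ℓ`. -/
abbrev GadgetV (n : ℕ) := Fin n ⊕ Fin n ⊕ Fin 3


open SimpleGraph
set_option linter.unusedSectionVars false

section general
variable {V : Type*} [Fintype V] {T : SimpleGraph V}

lemma irlc_exists_adj (hc : T.Connected) {v u : V} (h : u ≠ v) : ∃ w, T.Adj v w := by
  obtain ⟨p⟩ := hc.preconnected v u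
  cases p with
  | nil => exact absurd rfl h.symm
  | cons h q => exact ⟨_, h⟩

lemma irlc_ndeg_pos (hc : T.Connected) {v u : V} (h : u ≠ v) :
    1 ≤ (T.neighborSet v).ncard := by
  obtain ⟨w, hw⟩ := irlc_exists_adj hc h
  exact (Set.ncard_pos (Set.toFinite _)).2 ⟨w, hw⟩

lemma irlc_unique_nbr {v a b : V} (h1 : (T.neighborSet v).ncard ≤ 1)
    (ha : T.Adj v a) (hb : T.Adj v b) : a = b :=
  Set.ncard_le_one (Set.toFinite _) |>.1 h1 _ ha _ hb

lemma irlc_one_lt {v a b : V} (hab : a ≠ b) (ha : T.Adj v a) (hb : T.Adj v b) :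
    2 ≤ (T.neighborSet v).ncard :=
  (Set.one_lt_ncard (Set.toFinite _)).2 ⟨a, ha, b, hb, hab⟩

lemma irlc_adj_leaves (hc : T.Connected) {v w : V}
    (hv : (T.neighborSet v).ncard ≤ 1) (hw : (T.neighborSet w).ncard ≤ 1)
    (hadj : T.Adj v w) {u : V} (huv : u ≠ v) (huw : u ≠ w) : False := by
  classical
  obtain ⟨q0⟩ := hc.preconnected v u
  obtain ⟨pw, hp⟩ := q0.toPath
  cases pw with
  | nil => exact huv rfl
  | @cons _ x _ h1 q =>
    have hx : x = w := irlc_unique_nbr hv h1 hadj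
    subst hx
    cases q with
    | nil => exact huw rfl
    | @cons _ y _ h2 r =>
      have hy : y = v := irlc_unique_nbr hw h2 hadj.symm
      subst hy
      rw [Walk.isPath_def] at hp
      simp only [Walk.support_cons, List.nodup_cons] at hp
      exact hp.1 (List.mem_cons_of_mem _ r.start_mem_support)

lemma irlc_two_internal_adj {u v : V} (h : T.Reachable u v) (huv : u ≠ v)
    (hl : ∀ x, x ≠ u → x ≠ v → (T.neighborSet x).ncard ≤ 1) : T.Adj u v := by
  classical
  obtain ⟨q0⟩ := h
  obtain ⟨pw, hp⟩ := q0.toPath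
  cases pw with
  | nil => exact absurd rfl huv
  | @cons _ x _ h1 q =>
    cases q with
    | nil => exact h1
    | @cons _ y _ h2 r =>
      rw [Walk.isPath_def] at hp
      simp only [Walk.support_cons, List.nodup_cons] at hp
      have hxu : x ≠ u := fun he => hp.1 (he ▸ List.mem_cons_self)
      have hxv : x ≠ v := fun he => hp.2.1 (he ▸ r.end_mem_support)
      have hyu : y ≠ u := fun he => hp.1 (List.mem_cons_of_mem _ (he ▸ r.start_mem_support))
      have h2le := irlc_one_lt (show u ≠ y from fun he => hyu he.symm) h1.symm h2
      have := hl x hxu hxv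
      omega

lemma irlc_leaf_count (hmin : ∀ v : V, 1 ≤ (T.neighborSet v).ncard) :
    {v : V | (T.neighborSet v).ncard = 1}.ncard
      = Fintype.card V - {v : V | 2 ≤ (T.neighborSet v).ncard}.ncard := by
  have hset : {v : V | (T.neighborSet v).ncard = 1}
      = {v : V | 2 ≤ (T.neighborSet v).ncard}ᶜ := by
    ext v
    have := hmin v
    simp only [Set.mem_setOf_eq, Set.mem_compl_iff, not_le]
    omega
  have hcompl := Set.ncard_add_ncard_compl {v : V | 2 ≤ (T.neighborSet v).ncard}
    (Set.toFinite _) (Set.toFinite _)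
  rw [hset]
  rw [Nat.card_eq_fintype_card] at hcompl
  omega

lemma irlc_subset_pair {s : Set V} {a : V} (ha : a ∈ s) (hs : s.ncard ≤ 2) :
    ∃ v, s ⊆ {a, v} := by
  rcases (s \ {a}).eq_empty_or_nonempty with he | ⟨v, hv⟩
  · exact ⟨a, fun w hw => by
      rcases eq_or_ne w a with rfl | hne
      · exact Set.mem_insert _ _
      · exact absurd (show w ∈ s \ {a} from ⟨hw, by simp [hne]⟩) (he ▸ Set.notMem_empty w)⟩
  · refine ⟨v, fun w hw => ?_⟩
    rcases eq_or_ne w a with rfl | hne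
    · exact Set.mem_insert _ _
    · have hd : (s \ {a}).ncard ≤ 1 := by
        have h1 : (s \ {a}).ncard ≤ s.ncard - 1 := by
          have := Set.ncard_diff (show {a} ⊆ s by simpa using ha) (Set.toFinite _)
          simp [this]
        omega
      have : w = v := Set.ncard_le_one (Set.toFinite _) |>.1 hd
        _ (show w ∈ s \ {a} from ⟨hw, by simp [hne]⟩) _ hv
      simp [this]

end general


section parentGraph
variable {V : Type*} (r : V) (p : V → V)

/-- Graph determined by a parent function on all vertices except the root. -/
def irlcParentGraph : SimpleGraph V :=
  SimpleGraph.fromEdgeSet {e | ∃ v, v ≠ r ∧ e = s(v, p v)}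

variable {r p}

lemma irlcParentGraph_adj {a b : V} :
    (irlcParentGraph r p).Adj a b ↔
      a ≠ b ∧ ((a ≠ r ∧ p a = b) ∨ (b ≠ r ∧ p b = a)) := by
  simp only [irlcParentGraph, fromEdgeSet_adj, Set.mem_setOf_eq]
  constructor
  · rintro ⟨⟨v, hv, he⟩, hne⟩
    rw [Sym2.eq_iff] at he
    rcases he with ⟨rfl, rfl⟩ | ⟨rfl, rfl⟩
    · exact ⟨hne, Or.inl ⟨hv, rfl⟩⟩
    · exact ⟨hne, Or.inr ⟨hv, rfl⟩⟩
  · rintro ⟨hne, ⟨ha, hb⟩ | ⟨ha, hb⟩⟩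
    · exact ⟨⟨a, ha, by rw [hb]⟩, hne⟩
    · exact ⟨⟨b, ha, by rw [hb, Sym2.eq_swap]⟩, hne⟩

variable (d : V → ℕ)

lemma irlcParentGraph_reach (hd : ∀ v, v ≠ r → d (p v) < d v) :
    ∀ (k : ℕ) (v : V), d v ≤ k → (irlcParentGraph r p).Reachable v r := by
  intro k
  induction k with
  | zero =>
    intro v hv
    by_cases hvr : v = r
    · subst hvr; exact Reachable.refl _
    · exact absurd (hd v hvr) (by omega)
  | succ k ih =>
    intro v hv
    by_cases hvr : v = r
    · subst hvr; exact Reachable.refl _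
    · have hlt := hd v hvr
      have hadj : (irlcParentGraph r p).Adj v (p v) := by
        rw [irlcParentGraph_adj]
        exact ⟨fun he => by rw [← he] at hlt; omega, Or.inl ⟨hvr, rfl⟩⟩
      exact hadj.reachable.trans (ih (p v) (by omega))

lemma irlcParentGraph_connected [Nonempty V] (hd : ∀ v, v ≠ r → d (p v) < d v) :
    (irlcParentGraph r p).Connected := by
  refine Connected.mk fun a b => ?_
  exact (irlcParentGraph_reach d hd (d a) a le_rfl).trans
    (irlcParentGraph_reach d hd (d b) b le_rfl).symm

lemma irlc_cross_walk {G : SimpleGraph V} {A : Set V}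
    (h : ∀ a b, G.Adj a b → (a ∈ A ↔ b ∈ A)) :
    ∀ {x y : V}, G.Walk x y → x ∈ A → y ∈ A := by
  intro x y w
  induction w with
  | nil => exact id
  | cons hadj q ih => exact fun hx => ih ((h _ _ hadj).mp hx)

lemma irlc_no_cross {G : SimpleGraph V} {A : Set V}
    (h : ∀ a b, G.Adj a b → (a ∈ A ↔ b ∈ A)) {x y : V} (hx : x ∈ A) (hy : y ∉ A) :
    ¬ G.Reachable x y := by
  rintro ⟨w⟩
  exact hy (irlc_cross_walk h w hx)

lemma irlcParentGraph_acyclic (hd : ∀ v, v ≠ r → d (p v) < d v)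
    (hd2 : ∀ v, d v ≤ 2) (hd1 : ∀ v, v ≠ r → 1 ≤ d v) :
    (irlcParentGraph r p).IsAcyclic := by
  rw [isAcyclic_iff_forall_adj_isBridge]
  intro v w hvw
  rw [isBridge_iff]
  refine ?_
  rw [irlcParentGraph_adj] at hvw
  obtain ⟨hne, hcase⟩ := hvw
  -- reduce to the case where `v` is the child
  have key : ∀ u : V, u ≠ r → ∀ z, z ∉ ({z' | z' ≠ r ∧ (z' = u ∨ p z' = u)} : Set V) →
      ¬ ((irlcParentGraph r p) \ fromEdgeSet {s(u, p u)}).Reachable u z := by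
    intro u hur z hz
    set A : Set V := {z' | z' ≠ r ∧ (z' = u ∨ p z' = u)} with hA
    have hmemu : u ∈ A := ⟨hur, Or.inl rfl⟩
    refine irlc_no_cross ?_ hmemu hz
    intro a b hab
    rw [sdiff_adj, irlcParentGraph_adj, fromEdgeSet_adj] at hab
    obtain ⟨⟨hab_ne, hab_or⟩, hab_not⟩ := hab
    have hedge : s(a, b) ≠ s(u, p u) := by
      intro he; exact hab_not ⟨by simp [he], hab_ne⟩
    have claim : ∀ c : V, c ≠ r → s(c, p c) ≠ s(u, p u) → (c ∈ A ↔ p c ∈ A) := by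
      intro c hcr hce
      constructor
      · rintro ⟨-, rfl | hpc⟩
        · exact absurd rfl hce
        · exact ⟨fun he => hur (hpc ▸ he ▸ hpc ▸ rfl) |>.elim, Or.inl hpc⟩
      · rintro ⟨hpcr, hpc | hppc⟩
        · exact ⟨hcr, Or.inr hpc⟩
        · -- c would be a grandchild of u : depth contradiction
          exfalso
          have h1 := hd c hcr
          have h2 := hd (p c) hpcr
          have h3 := hd2 c
          have h4 := hd1 u hur
          rw [hppc] at h2
          omega
    rcases hab_or with ⟨har, hpa⟩ | ⟨hbr, hpb⟩
    · exact hpa ▸ claim a har (by rw [hpa]; exact hedge)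
    · exact (hpb ▸ claim b hbr (by rw [hpb, Sym2.eq_swap]; exact hedge)).symm
  rcases hcase with ⟨hvr, hpv⟩ | ⟨hwr, hpw⟩
  · rw [← hpv]
    refine key v hvr (p v) ?_
    rintro ⟨hpvr, h1 | h2⟩
    · exact absurd (hd v hvr) (by rw [h1]; omega)
    · have := hd v hvr; have := hd (p v) hpvr; rw [h2] at this; omega
  · rw [show s(v, w) = s(w, p w) by rw [hpw, Sym2.eq_swap]]
    intro hreach
    refine key w hwr v ?_ hreach.symm
    rintro ⟨hvr2, h1 | h2⟩
    · exact hne h1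
    · have ha := hd w hwr
      have hb := hd v hvr2
      rw [hpw] at ha; rw [h2] at hb; omega
end parentGraph



section gadget
variable {n : ℕ}

@[simp] abbrev gS : GadgetV n := Sum.inr (Sum.inr 0)
@[simp] abbrev gT : GadgetV n := Sum.inr (Sum.inr 1)
@[simp] abbrev gL : GadgetV n := Sum.inr (Sum.inr 2)
@[simp] abbrev gX (a : Fin n) : GadgetV n := Sum.inl a
@[simp] abbrev gY (b : Fin n) : GadgetV n := Sum.inr (Sum.inl b)

def gEdges (i j : Fin n) (EH : Finset (Fin n × Fin n)) : Set (Sym2 (GadgetV n)) :=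
  {e | (∃ a b : Fin n, (a, b) ∈ EH ∧
                e = s(Sum.inl a, Sum.inr (Sum.inl b))) ∨
              (∃ a : Fin n, e = s(Sum.inr (Sum.inr 0), Sum.inl a)) ∨
              (∃ b : Fin n, b ≠ j ∧ e = s(Sum.inr (Sum.inr 0), Sum.inr (Sum.inl b))) ∨
              e = s(Sum.inr (Sum.inr 2), Sum.inl i) ∨
              e = s(Sum.inr (Sum.inr 0), Sum.inr (Sum.inr 1)) ∨
              e = s(Sum.inr (Sum.inr 1), Sum.inr (Sum.inl j))}

variable {i j : Fin n} {EH : Finset (Fin n × Fin n)}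

lemma gG_t_adj {w : GadgetV n} (h : (fromEdgeSet (gEdges i j EH)).Adj gT w) :
    w = gS ∨ w = gY j := by
  rw [fromEdgeSet_adj] at h
  obtain ⟨hm, -⟩ := h
  simp only [gEdges, Set.mem_setOf_eq, Sym2.eq_iff] at hm
  rcases hm with ⟨a, b, _, h⟩ | ⟨a, h⟩ | ⟨b, _, h⟩ | h | h | h <;>
    simp_all <;> tauto

lemma gG_l_adj {w : GadgetV n} (h : (fromEdgeSet (gEdges i j EH)).Adj gL w) :
    w = gX i := by
  rw [fromEdgeSet_adj] at h
  obtain ⟨hm, -⟩ := h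
  simp only [gEdges, Set.mem_setOf_eq, Sym2.eq_iff] at hm
  rcases hm with ⟨a, b, _, h⟩ | ⟨a, h⟩ | ⟨b, _, h⟩ | h | h | h <;>
    simp_all <;> tauto

lemma gG_yj_adj {w : GadgetV n} (h : (fromEdgeSet (gEdges i j EH)).Adj (gY j) w) :
    w = gT ∨ ∃ a, (a, j) ∈ EH ∧ w = gX a := by
  rw [fromEdgeSet_adj] at h
  obtain ⟨hm, -⟩ := h
  simp only [gEdges, Set.mem_setOf_eq, Sym2.eq_iff] at hm
  rcases hm with ⟨a, b, hab, h⟩ | ⟨a, h⟩ | ⟨b, hb, h⟩ | h | h | h <;>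
    simp_all <;> tauto

lemma gG_xi_adj {w : GadgetV n} (h : (fromEdgeSet (gEdges i j EH)).Adj (gX i) w) :
    w = gL ∨ w = gS ∨ ∃ b, (i, b) ∈ EH ∧ w = gY b := by
  rw [fromEdgeSet_adj] at h
  obtain ⟨hm, -⟩ := h
  simp only [gEdges, Set.mem_setOf_eq, Sym2.eq_iff] at hm
  rcases hm with ⟨a, b, hab, h⟩ | ⟨a, h⟩ | ⟨b, hb, h⟩ | h | h | h <;>
    simp_all <;> tauto

end gadget

section tree
variable {n : ℕ}

def gpar (i j : Fin n) (h : Bool) : GadgetV n → GadgetV n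
  | Sum.inl _ => gS
  | Sum.inr (Sum.inl b) => if b = j then (if h then gX i else gT) else gS
  | Sum.inr (Sum.inr k) => if k = 2 then gX i else gS

def gdep (j : Fin n) : GadgetV n → ℕ
  | Sum.inl _ => 1
  | Sum.inr (Sum.inl b) => if b = j then 2 else 1
  | Sum.inr (Sum.inr k) => if k = 2 then 2 else if k = 1 then 1 else 0

variable {i j : Fin n} {h : Bool}

lemma gdep_par_lt : ∀ v : GadgetV n, v ≠ gS → gdep j (gpar i j h v) < gdep j v := by
  rintro (a | b | k) hv
  · simp [gpar, gdep]
  · by_cases hb : b = j <;> cases h <;> simp [gpar, gdep, hb]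
  · fin_cases k <;> simp_all [gpar, gdep]

lemma gdep_le2 : ∀ v : GadgetV n, gdep j v ≤ 2 := by
  rintro (a | b | k)
  · simp [gdep]
  · by_cases hb : b = j <;> simp [gdep, hb]
  · fin_cases k <;> simp [gdep]

lemma gdep_pos : ∀ v : GadgetV n, v ≠ gS → 1 ≤ gdep j v := by
  rintro (a | b | k) hv
  · simp [gdep]
  · by_cases hb : b = j <;> simp [gdep, hb]
  · fin_cases k <;> simp_all [gdep]
end tree
section treefacts
open SimpleGraph
variable {n : ℕ} {i j : Fin n} {EH : Finset (Fin n × Fin n)} {h : Bool}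

@[simp] lemma gpar_x (a : Fin n) : gpar i j h (Sum.inl a) = gS := rfl
@[simp] lemma gpar_t : gpar i j h (gT : GadgetV n) = gS := by simp [gpar]
@[simp] lemma gpar_l : gpar i j h (gL : GadgetV n) = gX i := by simp [gpar]

lemma fin3_cases (k : Fin 3) : k = 0 ∨ k = 1 ∨ k = 2 := by
  rcases k with ⟨kv, hkv⟩
  interval_cases kv <;> simp [Fin.ext_iff]
lemma gpar_y_ne {b : Fin n} (hb : b ≠ j) : gpar i j h (gY b) = gS := by
  simp [gpar, hb]
@[simp] lemma gpar_yj_true : gpar i j true (gY j) = gX i := by simp [gpar]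
@[simp] lemma gpar_yj_false : gpar i j false (gY j) = gT := by simp [gpar]

lemma gT_le_G (hmem : h = true → (i, j) ∈ EH) :
    irlcParentGraph (gS : GadgetV n) (gpar i j h) ≤ fromEdgeSet (gEdges i j EH) := by
  have key : ∀ v : GadgetV n, v ≠ gS →
      (fromEdgeSet (gEdges i j EH)).Adj v (gpar i j h v) := by
    rintro (a | b | k) hv
    · rw [fromEdgeSet_adj, gpar_x]
      exact ⟨Or.inr (Or.inl ⟨a, Sym2.eq_swap⟩), by simp⟩
    · by_cases hb : b = j
      · subst hb
        cases hcases : h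
        · rw [fromEdgeSet_adj, gpar_yj_false]
          exact ⟨Or.inr (Or.inr (Or.inr (Or.inr (Or.inr Sym2.eq_swap)))), by simp⟩
        · rw [fromEdgeSet_adj, gpar_yj_true]
          exact ⟨Or.inl ⟨i, b, hmem hcases, Sym2.eq_swap⟩, by simp⟩
      · rw [fromEdgeSet_adj, gpar_y_ne hb]
        exact ⟨Or.inr (Or.inr (Or.inl ⟨b, hb, Sym2.eq_swap⟩)), by simp⟩
    · rcases fin3_cases k with rfl | rfl | rfl
      · simp at hv
      · rw [fromEdgeSet_adj]
        rw [show gpar i j h (Sum.inr (Sum.inr 1)) = gS from gpar_t]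
        exact ⟨Or.inr (Or.inr (Or.inr (Or.inr (Or.inl Sym2.eq_swap)))), by simp⟩
      · rw [fromEdgeSet_adj]
        rw [show gpar i j h (Sum.inr (Sum.inr 2)) = gX i from gpar_l]
        exact ⟨Or.inr (Or.inr (Or.inr (Or.inl rfl))), by simp⟩
  intro u v huv
  rw [irlcParentGraph_adj] at huv
  rcases huv with ⟨hne, ⟨hu, hp⟩ | ⟨hv, hp⟩⟩
  · exact hp ▸ key u hu
  · exact (hp ▸ key v hv).symm
end treefacts
section nbr
open SimpleGraph
variable {n : ℕ} {i j : Fin n} {h : Bool}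

lemma gpar_range (w : GadgetV n) :
    gpar i j h w = gS ∨ gpar i j h w = gT ∨ gpar i j h w = gX i := by
  rcases w with a | b | k <;> simp [gpar] <;> split_ifs <;> tauto

lemma nbr_of_leaf {v : GadgetV n} (hv : v ≠ gS)
    (hnc : ∀ w : GadgetV n, w ≠ gS → gpar i j h w ≠ v) :
    (irlcParentGraph gS (gpar i j h)).neighborSet v = {gpar i j h v} := by
  ext w
  simp only [mem_neighborSet, irlcParentGraph_adj, Set.mem_singleton_iff]
  constructor
  · rintro ⟨hne, ⟨-, hp⟩ | ⟨hw, hp⟩⟩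
    · exact hp.symm
    · exact absurd hp (hnc w hw)
  · rintro rfl
    have hlt := gdep_par_lt (i := i) (j := j) (h := h) v hv
    exact ⟨fun he => by rw [← he] at hlt; omega, Or.inl ⟨hv, rfl⟩⟩

lemma nbr_xa {a : Fin n} (ha : a ≠ i) :
    (irlcParentGraph gS (gpar i j h)).neighborSet (gX a) = {gS} := by
  have := nbr_of_leaf (i := i) (j := j) (h := h) (v := gX a) (by simp)
    (fun w hw hc => by
      rcases gpar_range (i := i) (j := j) (h := h) w with h1 | h1 | h1 <;>
        rw [h1] at hc <;> simp_all)
  rwa [gpar_x] at this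

lemma nbr_yb {b : Fin n} (hb : b ≠ j) :
    (irlcParentGraph gS (gpar i j h)).neighborSet (gY b) = {gS} := by
  have := nbr_of_leaf (i := i) (j := j) (h := h) (v := gY b) (by simp)
    (fun w hw hc => by
      rcases gpar_range (i := i) (j := j) (h := h) w with h1 | h1 | h1 <;>
        rw [h1] at hc <;> simp_all)
  rwa [gpar_y_ne hb] at this

lemma nbr_l :
    (irlcParentGraph gS (gpar i j h)).neighborSet gL = {gX i} := by
  have := nbr_of_leaf (i := i) (j := j) (h := h) (v := gL) (by simp)
    (fun w hw hc => by
      rcases gpar_range (i := i) (j := j) (h := h) w with h1 | h1 | h1 <;>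
        rw [h1] at hc <;> simp_all)
  rwa [gpar_l] at this

lemma nbr_yj_false :
    (irlcParentGraph gS (gpar i j false)).neighborSet (gY j) = {gT} := by
  have := nbr_of_leaf (i := i) (j := j) (h := false) (v := gY j) (by simp)
    (fun w hw hc => by
      rcases gpar_range (i := i) (j := j) (h := false) w with h1 | h1 | h1 <;>
        rw [h1] at hc <;> simp_all)
  rwa [gpar_yj_false] at this

lemma nbr_yj_true :
    (irlcParentGraph gS (gpar i j true)).neighborSet (gY j) = {gX i} := by
  have := nbr_of_leaf (i := i) (j := j) (h := true) (v := gY j) (by simp)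
    (fun w hw hc => by
      rcases gpar_range (i := i) (j := j) (h := true) w with h1 | h1 | h1 <;>
        rw [h1] at hc <;> simp_all)
  rwa [gpar_yj_true] at this

lemma nbr_t_true :
    (irlcParentGraph gS (gpar i j true)).neighborSet gT = {gS} := by
  have := nbr_of_leaf (i := i) (j := j) (h := true) (v := gT) (by simp)
    (fun w hw hc => by
      rcases w with a | b | k
      · simp [gpar] at hc
      · simp only [gpar] at hc; split_ifs at hc <;> simp_all
      · simp only [gpar] at hc; split_ifs at hc <;> simp_all)
  rwa [gpar_t] at this

lemma adj_S_Xi : (irlcParentGraph (gS : GadgetV n) (gpar i j h)).Adj gS (gX i) := by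
  rw [irlcParentGraph_adj]
  exact ⟨by simp, Or.inr ⟨by simp, gpar_x i⟩⟩

lemma adj_S_T : (irlcParentGraph (gS : GadgetV n) (gpar i j h)).Adj gS gT := by
  rw [irlcParentGraph_adj]
  exact ⟨by simp, Or.inr ⟨by simp, gpar_t⟩⟩

lemma adj_Xi_L : (irlcParentGraph (gS : GadgetV n) (gpar i j h)).Adj (gX i) gL := by
  rw [irlcParentGraph_adj]
  exact ⟨by simp, Or.inr ⟨by simp, gpar_l⟩⟩

lemma adj_T_Yj : (irlcParentGraph (gS : GadgetV n) (gpar i j false)).Adj gT (gY j) := by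
  rw [irlcParentGraph_adj]
  exact ⟨by simp, Or.inr ⟨by simp, gpar_yj_false⟩⟩

lemma two_le_S : 2 ≤ ((irlcParentGraph (gS : GadgetV n) (gpar i j h)).neighborSet gS).ncard :=
  irlc_one_lt (by simp) adj_S_Xi adj_S_T

lemma two_le_Xi : 2 ≤ ((irlcParentGraph (gS : GadgetV n) (gpar i j h)).neighborSet (gX i)).ncard :=
  irlc_one_lt (show (gS : GadgetV n) ≠ gL by simp) adj_S_Xi.symm adj_Xi_L

lemma two_le_T_false :
    2 ≤ ((irlcParentGraph (gS : GadgetV n) (gpar i j false)).neighborSet gT).ncard :=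
  irlc_one_lt (show (gS : GadgetV n) ≠ gY j by simp) adj_S_T.symm adj_T_Yj

lemma leafset_false :
    {v : GadgetV n | ((irlcParentGraph gS (gpar i j false)).neighborSet v).ncard = 1}
      = Set.univ \ {gS, gT, gX i} := by
  ext v
  simp only [Set.mem_setOf_eq, Set.mem_diff, Set.mem_univ, true_and, Set.mem_insert_iff,
    Set.mem_singleton_iff, not_or]
  constructor
  · intro h1
    refine ⟨?_, ?_, ?_⟩ <;> rintro rfl
    · have := two_le_S (i := i) (j := j) (h := false); omega
    · have := two_le_T_false (i := i) (j := j); omega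
    · have := two_le_Xi (i := i) (j := j) (h := false); omega
  · rintro ⟨h1, h2, h3⟩
    rcases v with a | b | k
    · have ha : a ≠ i := fun he => h3 (by rw [he])
      rw [nbr_xa ha]; simp
    · by_cases hb : b = j
      · subst hb; rw [nbr_yj_false]; simp
      · rw [nbr_yb hb]; simp
    · rcases fin3_cases k with rfl | rfl | rfl
      · exact absurd rfl h1
      · exact absurd rfl h2
      · rw [nbr_l]; simp

lemma leafset_true :
    {v : GadgetV n | ((irlcParentGraph gS (gpar i j true)).neighborSet v).ncard = 1}
      = Set.univ \ {gS, gX i} := by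
  ext v
  simp only [Set.mem_setOf_eq, Set.mem_diff, Set.mem_univ, true_and, Set.mem_insert_iff,
    Set.mem_singleton_iff, not_or]
  constructor
  · intro h1
    refine ⟨?_, ?_⟩ <;> rintro rfl
    · have := two_le_S (i := i) (j := j) (h := true); omega
    · have := two_le_Xi (i := i) (j := j) (h := true); omega
  · rintro ⟨h1, h3⟩
    rcases v with a | b | k
    · have ha : a ≠ i := fun he => h3 (by rw [he])
      rw [nbr_xa ha]; simp
    · by_cases hb : b = j
      · subst hb; rw [nbr_yj_true]; simp
      · rw [nbr_yb hb]; simp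
    · rcases fin3_cases k with rfl | rfl | rfl
      · exact absurd rfl h1
      · rw [nbr_t_true]; simp
      · rw [nbr_l]; simp

lemma gadget_card : Fintype.card (GadgetV n) = 2 * n + 3 := by
  simp [Fintype.card_sum]
  omega

lemma leafcount_false :
    {v : GadgetV n | ((irlcParentGraph gS (gpar i j false)).neighborSet v).ncard = 1}.ncard
      = 2 * n := by
  rw [leafset_false]
  rw [Set.ncard_diff (Set.subset_univ _) (Set.toFinite _)]
  rw [Set.ncard_univ, Nat.card_eq_fintype_card, gadget_card]
  have h3 : ({gS, gT, gX i} : Set (GadgetV n)).ncard = 3 := by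
    rw [Set.ncard_insert_of_notMem (by simp) (Set.toFinite _),
      Set.ncard_insert_of_notMem (by simp) (Set.toFinite _), Set.ncard_singleton]
  rw [h3]
  omega

lemma leafcount_true :
    {v : GadgetV n | ((irlcParentGraph gS (gpar i j true)).neighborSet v).ncard = 1}.ncard
      = 2 * n + 1 := by
  rw [leafset_true]
  rw [Set.ncard_diff (Set.subset_univ _) (Set.toFinite _)]
  rw [Set.ncard_univ, Nat.card_eq_fintype_card, gadget_card]
  have h2 : ({gS, gX i} : Set (GadgetV n)).ncard = 2 := by
    rw [Set.ncard_insert_of_notMem (by simp) (Set.toFinite _), Set.ncard_singleton]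
  rw [h2]
  omega

end nbr
section ub
open SimpleGraph
variable {n : ℕ} {i j : Fin n} {EH : Finset (Fin n × Fin n)}
  {T' : SimpleGraph (GadgetV n)}

lemma irlc_deg1 (hconn : T'.Connected) (v : GadgetV n) :
    1 ≤ (T'.neighborSet v).ncard := by
  refine irlc_ndeg_pos hconn (u := if v = gS then gT else gS) ?_
  split_ifs with hv
  · rw [hv]; simp
  · exact fun he => hv he.symm

lemma irlc_L_le_one (hle : T' ≤ fromEdgeSet (gEdges i j EH)) :
    (T'.neighborSet gL).ncard ≤ 1 := by
  have hsub : T'.neighborSet gL ⊆ {gX i} := fun w hw => gG_l_adj (hle hw)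
  have := Set.ncard_le_ncard hsub (Set.toFinite _)
  simpa using this

lemma irlc_Xi_internal (hle : T' ≤ fromEdgeSet (gEdges i j EH)) (hconn : T'.Connected) :
    2 ≤ (T'.neighborSet (gX i)).ncard := by
  obtain ⟨w, hw⟩ := irlc_exists_adj hconn (show (gS : GadgetV n) ≠ gL by simp)
  have hwx := gG_l_adj (hle hw)
  have hLadj : T'.Adj gL (gX i) := hwx ▸ hw
  by_contra hc
  push_neg at hc
  exact irlc_adj_leaves hconn (irlc_L_le_one hle) (by omega) hLadj
    (u := gS) (by simp) (by simp)

lemma irlc_star_case (hle : T' ≤ fromEdgeSet (gEdges i j EH)) (hconn : T'.Connected)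
    (hl : ∀ x : GadgetV n, x ≠ gX i → (T'.neighborSet x).ncard ≤ 1) : False := by
  obtain ⟨w, hw⟩ := irlc_exists_adj hconn (show (gS : GadgetV n) ≠ gT by simp)
  have hwc := gG_t_adj (hle hw)
  have hT1 : (T'.neighborSet gT).ncard ≤ 1 := hl gT (by simp)
  have hw1 : (T'.neighborSet w).ncard ≤ 1 :=
    hl w (by rcases hwc with rfl | rfl <;> simp)
  exact irlc_adj_leaves hconn hT1 hw1 hw (u := gL) (by simp)
    (by rcases hwc with rfl | rfl <;> simp)

lemma irlc_N2 (hle : T' ≤ fromEdgeSet (gEdges i j EH)) (hconn : T'.Connected) :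
    2 ≤ {v : GadgetV n | 2 ≤ (T'.neighborSet v).ncard}.ncard := by
  by_contra hc
  push_neg at hc
  have hXi : gX i ∈ {v : GadgetV n | 2 ≤ (T'.neighborSet v).ncard} :=
    irlc_Xi_internal hle hconn
  refine irlc_star_case hle hconn fun x hx => ?_
  by_contra h2
  push_neg at h2
  have hx2 : x ∈ {v : GadgetV n | 2 ≤ (T'.neighborSet v).ncard} := by
    simp only [Set.mem_setOf_eq]; omega
  exact hx ((Set.ncard_le_one (Set.toFinite _)).1 (by omega) _ hx2 _ hXi)

lemma irlc_N3 (hnm : (i, j) ∉ EH)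
    (hle : T' ≤ fromEdgeSet (gEdges i j EH)) (hconn : T'.Connected) :
    3 ≤ {v : GadgetV n | 2 ≤ (T'.neighborSet v).ncard}.ncard := by
  by_contra hc
  push_neg at hc
  set N := {v : GadgetV n | 2 ≤ (T'.neighborSet v).ncard} with hN
  have hXi : gX i ∈ N := irlc_Xi_internal hle hconn
  obtain ⟨v, hsub⟩ := irlc_subset_pair hXi (by omega)
  by_cases hvN : v ∈ N ∧ v ≠ gX i
  · obtain ⟨hvN', hvX⟩ := hvN
    have hl : ∀ x : GadgetV n, x ≠ gX i → x ≠ v → (T'.neighborSet x).ncard ≤ 1 := by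
      intro x h1 h2
      by_contra h3
      push_neg at h3
      have : x ∈ N := by simp only [hN, Set.mem_setOf_eq]; omega
      rcases hsub this with h4 | h4
      · exact h1 h4
      · exact h2 h4
    have hadj := irlc_two_internal_adj (hconn.preconnected (gX i) v)
      (fun he => hvX he.symm) hl
    rcases gG_xi_adj (hle hadj) with rfl | rfl | ⟨b, hb, rfl⟩
    · have := irlc_L_le_one hle
      have : (2 : ℕ) ≤ (T'.neighborSet gL).ncard := hvN'
      omega
    · -- v = gS : use y_j
      have hyj : (T'.neighborSet (gY j)).ncard ≤ 1 := hl (gY j) (by simp) (by simp)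
      obtain ⟨w, hw⟩ := irlc_exists_adj hconn (show (gS : GadgetV n) ≠ gY j by simp)
      rcases gG_yj_adj (hle hw) with rfl | ⟨a, ha, rfl⟩
      · have hw1 : (T'.neighborSet gT).ncard ≤ 1 := hl gT (by simp) (by simp)
        exact irlc_adj_leaves hconn hyj hw1 hw (u := gX i) (by simp) (by simp)
      · have hai : a ≠ i := fun he => hnm (he ▸ ha)
        have hw1 : (T'.neighborSet (gX a)).ncard ≤ 1 :=
          hl (gX a) (by simp [hai]) (by simp)
        exact irlc_adj_leaves hconn hyj hw1 hw (u := gX i) (by simp)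
          (by simp [Ne.symm hai])
    · -- v = gY b with (i, b) ∈ EH, so b ≠ j : use t
      have hbj : b ≠ j := fun he => hnm (he ▸ hb)
      have hT1 : (T'.neighborSet gT).ncard ≤ 1 := hl gT (by simp) (by simp)
      obtain ⟨w, hw⟩ := irlc_exists_adj hconn (show (gS : GadgetV n) ≠ gT by simp)
      rcases gG_t_adj (hle hw) with rfl | rfl
      · have hw1 : (T'.neighborSet gS).ncard ≤ 1 := hl gS (by simp) (by simp)
        exact irlc_adj_leaves hconn hT1 hw1 hw (u := gX i) (by simp) (by simp)
      · have hw1 : (T'.neighborSet (gY j)).ncard ≤ 1 :=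
          hl (gY j) (by simp) (by simp [Ne.symm hbj])
        exact irlc_adj_leaves hconn hT1 hw1 hw (u := gX i) (by simp) (by simp)
  · refine irlc_star_case hle hconn fun x hx => ?_
    by_contra h2
    push_neg at h2
    have hxN : x ∈ N := by simp only [hN, Set.mem_setOf_eq]; omega
    rcases hsub hxN with h4 | h4
    · exact hx h4
    · exact hvN ⟨h4 ▸ hxN, h4 ▸ hx⟩

lemma irlc_ub_mem (hle : T' ≤ fromEdgeSet (gEdges i j EH)) (hconn : T'.Connected) :
    {v : GadgetV n | (T'.neighborSet v).ncard = 1}.ncard ≤ 2 * n + 1 := by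
  have hcount := irlc_leaf_count (T := T') (irlc_deg1 hconn)
  rw [gadget_card] at hcount
  have := irlc_N2 hle hconn
  omega

lemma irlc_ub_nm (hnm : (i, j) ∉ EH)
    (hle : T' ≤ fromEdgeSet (gEdges i j EH)) (hconn : T'.Connected) :
    {v : GadgetV n | (T'.neighborSet v).ncard = 1}.ncard ≤ 2 * n := by
  have hcount := irlc_leaf_count (T := T') (irlc_deg1 hconn)
  rw [gadget_card] at hcount
  have := irlc_N3 hnm hle hconn
  omega

end ub


/-- For `n ≥ 1`, fixed `i, j`, and any set `E_H` of bipartite edges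
`(x_a, y_b)`, consider the graph `G` on `{x_1,…,x_n} ∪ {y_1,…,y_n} ∪ {s,t,ℓ}` with the
bipartite edges `E_H`, edges from `s` to every `x_a` and to every `y_b` with `b ≠ j`, and
edges `(ℓ, x_i)`, `(s, t)`, `(t, y_j)`. Then `G` is connected and
`leaf(G) = 2n + 1` if `(x_i, y_j) ∈ E_H` and `leaf(G) = 2n` otherwise. -/
theorem index_reduction_leaf_count (n : ℕ) (hn : 1 ≤ n) (i j : Fin n)
    (EH : Finset (Fin n × Fin n)) :
    ∀ G : SimpleGraph (GadgetV n),
      G = SimpleGraph.fromEdgeSet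
        ({e | (∃ a b : Fin n, (a, b) ∈ EH ∧
                e = s(Sum.inl a, Sum.inr (Sum.inl b))) ∨
              (∃ a : Fin n, e = s(Sum.inr (Sum.inr 0), Sum.inl a)) ∨
              (∃ b : Fin n, b ≠ j ∧ e = s(Sum.inr (Sum.inr 0), Sum.inr (Sum.inl b))) ∨
              e = s(Sum.inr (Sum.inr 2), Sum.inl i) ∨
              e = s(Sum.inr (Sum.inr 0), Sum.inr (Sum.inr 1)) ∨
              e = s(Sum.inr (Sum.inr 1), Sum.inr (Sum.inl j))} :
            Set (Sym2 (GadgetV n))) →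
      G.Connected ∧ maxLeaf G = (if (i, j) ∈ EH then 2 * n + 1 else 2 * n) := by
  intro G hG
  have hG' : G = SimpleGraph.fromEdgeSet (gEdges i j EH) := hG
  subst hG'
  clear hG
  by_cases hm : (i, j) ∈ EH
  · have hdlt := gdep_par_lt (n := n) (i := i) (j := j) (h := true)
    have hconn : (irlcParentGraph (gS : GadgetV n) (gpar i j true)).Connected :=
      irlcParentGraph_connected (gdep j) hdlt
    have hacyc : (irlcParentGraph (gS : GadgetV n) (gpar i j true)).IsAcyclic :=
      irlcParentGraph_acyclic (gdep j) hdlt gdep_le2 gdep_pos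
    have hle := gT_le_G (n := n) (i := i) (j := j) (EH := EH) (h := true) (fun _ => hm)
    refine ⟨hconn.mono hle, ?_⟩
    rw [if_pos hm]
    simp only [maxLeaf]
    apply IsGreatest.csSup_eq
    constructor
    · exact ⟨_, hle, ⟨hconn, hacyc⟩, leafcount_true⟩
    · rintro c ⟨T', hle', htree', rfl⟩
      exact irlc_ub_mem hle' htree'.isConnected
  · have hdlt := gdep_par_lt (n := n) (i := i) (j := j) (h := false)
    have hconn : (irlcParentGraph (gS : GadgetV n) (gpar i j false)).Connected :=
      irlcParentGraph_connected (gdep j) hdlt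
    have hacyc : (irlcParentGraph (gS : GadgetV n) (gpar i j false)).IsAcyclic :=
      irlcParentGraph_acyclic (gdep j) hdlt gdep_le2 gdep_pos
    have hle := gT_le_G (n := n) (i := i) (j := j) (EH := EH) (h := false)
      (fun hc => by simp at hc)
    refine ⟨hconn.mono hle, ?_⟩
    rw [if_neg hm]
    simp only [maxLeaf]
    apply IsGreatest.csSup_eq
    constructor
    · exact ⟨_, hle, ⟨hconn, hacyc⟩, leafcount_false⟩
    · rintro c ⟨T', hle', htree', rfl⟩
      exact irlc_ub_nm hm hle' htree'.isConnected
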